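/- arXiv:2502.14855 — 2 statements merged into one kernel-verified Lean document; each statement's English description precedes it below -/
import Mathlib

section
/- Let M ≥ 1, θ : Fin M → ℝ, let q : Fin M → ℝ be a probability vector, let r : Fin M → ℝ satisfy 0 ≤ r a ≤ 1 for all a, and assume r̄ := ∑_a q a · r a ∈ (0,1). Define F(t) = ∑_a q a · ℓ(σ(t − θ a), r a). Then F has a unique global minimizer t₀ ∈ ℝ, and a point t ∈ ℝ is a global minimizer of F if and only if ∑_a q a · σ(t − θ a) = r̄. -/
/-- The logistic sigmoid `σ(t) = 1 / (1 + exp (-t))`. -/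
noncomputable def sigmoid (t : ℝ) : ℝ := 1 / (1 + Real.exp (-t))

/-- Binary cross-entropy loss `ℓ(p, y) = -(y log p + (1 - y) log (1 - p))`. -/
noncomputable def bce (p y : ℝ) : ℝ := -(y * Real.log p + (1 - y) * Real.log (1 - p))

/-- A probability vector on `Fin M`. -/
def IsProbVec {M : ℕ} (q : Fin M → ℝ) : Prop := (∀ a, 0 ≤ q a) ∧ ∑ a, q a = 1

open Filter Topology

lemma one_add_exp_pos (x : ℝ) : 0 < 1 + Real.exp (-x) := by positivity

lemma sigmoid_strictMono : StrictMono sigmoid := by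
  intro t s hts
  unfold sigmoid
  have h1 : Real.exp (-s) < Real.exp (-t) := Real.exp_lt_exp.mpr (by linarith)
  exact one_div_lt_one_div_of_lt (one_add_exp_pos s) (by linarith)

lemma sigmoid_continuous : Continuous sigmoid :=
  continuous_const.div (continuous_const.add (Real.continuous_exp.comp continuous_neg))
    (fun x => ne_of_gt (one_add_exp_pos x))

lemma sigmoid_tendsto_atTop : Tendsto sigmoid atTop (𝓝 1) := by
  have h1 : Tendsto (fun t : ℝ => Real.exp (-t)) atTop (𝓝 0) :=
    Real.tendsto_exp_atBot.comp tendsto_neg_atTop_atBot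
  have h2 : Tendsto (fun t : ℝ => 1 + Real.exp (-t)) atTop (𝓝 1) := by
    simpa using h1.const_add 1
  have := (tendsto_const_nhds (x := (1:ℝ))).div h2 one_ne_zero
  rw [div_one] at this
  exact this

lemma sigmoid_tendsto_atBot : Tendsto sigmoid atBot (𝓝 0) := by
  have h1 : Tendsto (fun t : ℝ => Real.exp (-t)) atBot atTop :=
    Real.tendsto_exp_atTop.comp tendsto_neg_atBot_atTop
  have h2 : Tendsto (fun t : ℝ => 1 + Real.exp (-t)) atBot atTop :=
    tendsto_atTop_add_const_left _ 1 h1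
  exact Tendsto.div_atTop tendsto_const_nhds h2

lemma bce_sigmoid (x y : ℝ) :
    bce (sigmoid x) y = Real.log (1 + Real.exp (-x)) + (1 - y) * x := by
  have hpos := one_add_exp_pos x
  have hlog1 : Real.log (sigmoid x) = -Real.log (1 + Real.exp (-x)) := by
    unfold sigmoid; rw [one_div, Real.log_inv]
  have h2 : 1 - sigmoid x = Real.exp (-x) / (1 + Real.exp (-x)) := by
    unfold sigmoid; field_simp; ring
  have hlog2 : Real.log (1 - sigmoid x) = -x - Real.log (1 + Real.exp (-x)) := by
    rw [h2, Real.log_div (Real.exp_ne_zero _) (ne_of_gt hpos), Real.log_exp]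
  unfold bce; rw [hlog1, hlog2]; ring

lemma hasDerivAt_bce_sigmoid (c y t : ℝ) :
    HasDerivAt (fun t => bce (sigmoid (t - c)) y) (sigmoid (t - c) - y) t := by
  have hx : HasDerivAt (fun t : ℝ => t - c) 1 t := (hasDerivAt_id t).sub_const c
  have h1 : HasDerivAt (fun t : ℝ => -(t - c)) (-1) t := hx.neg
  have h2 : HasDerivAt (fun t : ℝ => Real.exp (-(t - c))) (Real.exp (-(t - c)) * (-1)) t :=
    h1.exp
  have h3 : HasDerivAt (fun t : ℝ => 1 + Real.exp (-(t - c)))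
      (Real.exp (-(t - c)) * (-1)) t := h2.const_add 1
  have h4 : HasDerivAt (fun t : ℝ => Real.log (1 + Real.exp (-(t - c))))
      ((Real.exp (-(t - c)) * (-1)) / (1 + Real.exp (-(t - c)))) t :=
    h3.log (ne_of_gt (one_add_exp_pos _))
  have h5 : HasDerivAt (fun t : ℝ => (1 - y) * (t - c)) ((1 - y) * 1) t := hx.const_mul _
  have h6 := h4.add h5
  have heq : (fun t => bce (sigmoid (t - c)) y)
      = fun t : ℝ => Real.log (1 + Real.exp (-(t - c))) + (1 - y) * (t - c) := by
    funext u; exact bce_sigmoid (u - c) y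
  rw [heq]
  refine h6.congr_deriv ?_
  have hpos := one_add_exp_pos (t - c)
  unfold sigmoid
  field_simp; ring


/-- If `q` is a probability vector, `0 ≤ r a ≤ 1` for all `a`, and
`r̄ = ∑ a, q a * r a ∈ (0,1)`, then `F(t) = ∑ a, q a * ℓ(σ(t - θ a), r a)` has a unique
global minimizer, and `t` is a global minimizer of `F` iff `∑ a, q a * σ(t - θ a) = r̄`. -/
theorem bt_objective_unique_minimizer {M : ℕ} (hM : 1 ≤ M) (θ : Fin M → ℝ)
    (q : Fin M → ℝ) (hq : IsProbVec q) (r : Fin M → ℝ) (hr : ∀ a, 0 ≤ r a ∧ r a ≤ 1)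
    (hbar : (∑ a, q a * r a) ∈ Set.Ioo (0 : ℝ) 1) :
    (∃! t₀ : ℝ, ∀ t : ℝ,
        ∑ a, q a * bce (sigmoid (t₀ - θ a)) (r a) ≤ ∑ a, q a * bce (sigmoid (t - θ a)) (r a)) ∧
    (∀ t : ℝ,
        (∀ s : ℝ, ∑ a, q a * bce (sigmoid (t - θ a)) (r a)
            ≤ ∑ a, q a * bce (sigmoid (s - θ a)) (r a)) ↔
          ∑ a, q a * sigmoid (t - θ a) = ∑ a, q a * r a) := by
  set F : ℝ → ℝ := fun t => ∑ a, q a * bce (sigmoid (t - θ a)) (r a) with hFdef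
  set G : ℝ → ℝ := fun t => ∑ a, q a * sigmoid (t - θ a) with hGdef
  set rbar : ℝ := ∑ a, q a * r a with hrbar
  -- derivative of F
  have hF : ∀ t, HasDerivAt F (G t - rbar) t := by
    intro t
    have h : HasDerivAt F (∑ a, q a * (sigmoid (t - θ a) - r a)) t := by
      apply HasDerivAt.fun_sum
      intro a _
      exact (hasDerivAt_bce_sigmoid (θ a) (r a) t).const_mul (q a)
    convert h using 1
    simp only [hGdef, hrbar, mul_sub, Finset.sum_sub_distrib]
  have hFcont : Continuous F := continuous_iff_continuousAt.mpr fun t => (hF t).continuousAt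
  -- q has a positive entry
  obtain ⟨a0, ha0⟩ : ∃ a, 0 < q a := by
    by_contra h
    push_neg at h
    have : (∑ a, q a) ≤ 0 := Finset.sum_nonpos fun a _ => h a
    rw [hq.2] at this; linarith
  -- G strictly monotone, continuous, limits
  have hGmono : StrictMono G := by
    intro t s hts
    refine Finset.sum_lt_sum (fun a _ => ?_) ⟨a0, Finset.mem_univ _, ?_⟩
    · exact mul_le_mul_of_nonneg_left (sigmoid_strictMono (by linarith)).le (hq.1 a)
    · exact mul_lt_mul_of_pos_left (sigmoid_strictMono (by linarith)) ha0
  have hGcont : Continuous G :=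
    continuous_finset_sum _ fun a _ =>
      continuous_const.mul (sigmoid_continuous.comp (continuous_id.sub continuous_const))
  have hGtop : Tendsto G atTop (𝓝 1) := by
    have h : Tendsto G atTop (𝓝 (∑ a, q a * 1)) := by
      apply tendsto_finset_sum
      intro a _
      exact (sigmoid_tendsto_atTop.comp (tendsto_atTop_add_const_right _ (-(θ a))
        tendsto_id)).const_mul (q a) |>.congr (fun t => by simp [sub_eq_add_neg])
    simpa [hq.2] using h
  have hGbot : Tendsto G atBot (𝓝 0) := by
    have h : Tendsto G atBot (𝓝 (∑ a, q a * 0)) := by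
      apply tendsto_finset_sum
      intro a _
      exact (sigmoid_tendsto_atBot.comp (tendsto_atBot_add_const_right _ (-(θ a))
        tendsto_id)).const_mul (q a) |>.congr (fun t => by simp [sub_eq_add_neg])
    simpa using h
  -- existence of root of G = rbar
  obtain ⟨b, hb⟩ : ∃ b, rbar < G b :=
    (hGtop.eventually (eventually_gt_nhds hbar.2)).exists
  obtain ⟨a, ha⟩ : ∃ a, G a < rbar :=
    (hGbot.eventually (eventually_lt_nhds hbar.1)).exists
  have hab : a < b := by
    by_contra h
    push_neg at h
    rcases eq_or_lt_of_le h with h | h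
    · rw [h] at hb; linarith
    · have := hGmono h; linarith
  obtain ⟨t₀, _, hGt₀⟩ : ∃ t₀ ∈ Set.Ioo a b, G t₀ = rbar := by
    have := intermediate_value_Ioo hab.le hGcont.continuousOn (a := a) (b := b)
    obtain ⟨t₀, ht₀, hGt⟩ := this ⟨ha, hb⟩
    exact ⟨t₀, ht₀, hGt⟩
  -- key characterization
  have key : ∀ t : ℝ, (∀ s : ℝ, F t ≤ F s) ↔ G t = rbar := by
    intro t
    constructor
    · intro h
      have hloc : IsLocalMin F t := Filter.Eventually.of_forall h
      have := hloc.hasDerivAt_eq_zero (hF t)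
      linarith [this]
    · intro hGt s
      rcases lt_trichotomy t s with hts | h | hst
      · obtain ⟨c, hc, hcs⟩ := exists_hasDerivAt_eq_slope F (fun u => G u - rbar) hts
          hFcont.continuousOn (fun x _ => hF x)
        have h1 : 0 < G c - rbar := by
          have := hGmono hc.1; linarith
        rw [hcs] at h1
        have hst : 0 < s - t := sub_pos.mpr hts
        have := mul_pos h1 hst
        rw [div_mul_cancel₀ _ (ne_of_gt hst)] at this
        linarith
      · rw [h]
      · obtain ⟨c, hc, hcs⟩ := exists_hasDerivAt_eq_slope F (fun u => G u - rbar) hst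
          hFcont.continuousOn (fun x _ => hF x)
        have h1 : G c - rbar < 0 := by
          have := hGmono hc.2; linarith
        rw [hcs] at h1
        have hts : 0 < t - s := sub_pos.mpr hst
        have := mul_neg_of_neg_of_pos h1 hts
        rw [div_mul_cancel₀ _ (ne_of_gt hts)] at this
        linarith
  exact ⟨⟨t₀, (key t₀).mpr hGt₀, fun y hy =>
    hGmono.injective (((key y).mp hy).trans hGt₀.symm)⟩, key⟩
end

section
/- For all real numbers a > 0, b > 0 and λ ≥ 1, a/(a + λ·b + 1) + b/(b + λ·a + 1) + 1/(1 + a + b) ≤ 1, with equality if and only if λ = 1. Consequently, in the grounded Rao–Kupper model the probability assigned to the outcome 'tie' — namely 1 − a/(a + λb + 1) − b/(b + λa + 1) − 1/(1 + a + b) — is nonnegative, so the four outcome probabilities form a genuine probability distribution. -/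
/-- For `a > 0`, `b > 0`, `λ ≥ 1`,
`a/(a + λb + 1) + b/(b + λa + 1) + 1/(1 + a + b) ≤ 1`, with equality iff `λ = 1`;
hence the grounded Rao–Kupper tie probability is nonnegative. -/
theorem groundedRaoKupper_tie_prob_nonneg (a b lam : ℝ) (ha : 0 < a) (hb : 0 < b)
    (hlam : 1 ≤ lam) :
    a / (a + lam * b + 1) + b / (b + lam * a + 1) + 1 / (1 + a + b) ≤ 1 ∧
      (a / (a + lam * b + 1) + b / (b + lam * a + 1) + 1 / (1 + a + b) = 1 ↔ lam = 1) ∧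
      0 ≤ 1 - a / (a + lam * b + 1) - b / (b + lam * a + 1) - 1 / (1 + a + b) := by
  have h1 : 0 < a + lam * b + 1 := by nlinarith
  have h2 : 0 < b + lam * a + 1 := by nlinarith
  have h3 : 0 < (1 : ℝ) + a + b := by linarith
  have hD : 0 < (a + lam * b + 1) * (b + lam * a + 1) * (1 + a + b) := by positivity
  have key : 1 - (a / (a + lam * b + 1) + b / (b + lam * a + 1) + 1 / (1 + a + b)) =
      a * b * (lam - 1) * (2 + (a + b) * (lam + 1)) /
        ((a + lam * b + 1) * (b + lam * a + 1) * (1 + a + b)) := by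
    field_simp
    ring
  have hfac : 0 < 2 + (a + b) * (lam + 1) := by nlinarith
  have hnum : 0 ≤ a * b * (lam - 1) * (2 + (a + b) * (lam + 1)) := by
    have : 0 ≤ lam - 1 := by linarith
    positivity
  have hle : 1 - (a / (a + lam * b + 1) + b / (b + lam * a + 1) + 1 / (1 + a + b)) ≥ 0 := by
    rw [key]; exact div_nonneg hnum hD.le
  refine ⟨by linarith, ⟨?_, ?_⟩, by linarith⟩
  · intro h
    have h0 : a * b * (lam - 1) * (2 + (a + b) * (lam + 1)) /
        ((a + lam * b + 1) * (b + lam * a + 1) * (1 + a + b)) = 0 := by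
      rw [← key, h]; ring
    have hN : a * b * (lam - 1) * (2 + (a + b) * (lam + 1)) = 0 :=
      (div_eq_zero_iff.mp h0).resolve_right hD.ne'
    have : lam - 1 = 0 := by
      by_contra hc
      have h1' : 0 < lam - 1 := lt_of_le_of_ne (by linarith) (Ne.symm hc)
      nlinarith [mul_pos (mul_pos (mul_pos ha hb) h1') hfac]
    linarith
  · intro h
    subst h
    rw [div_add_div _ _ h1.ne' h2.ne', div_add_div _ _ (by positivity) h3.ne']
    rw [div_eq_one_iff_eq (by positivity)]
    ring
end
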